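/- Let (X, d) be a metric space and r : X → ℝ a function with r x > 0 for all x ∈ X. Let K > 0 and δ ∈ (0, 1]. Suppose p, p' ∈ X satisfy d(p', p) ≤ K · r(p) and r(p') < δ · r(p), and suppose there is a constant c > 0 such that r x ≥ c for every x ∈ Metric.ball p (3 · K · r(p)). Then there exists a point q ∈ Metric.ball p (3 · K · r(p)) such that: (i) r(q) < δ · r(p); (ii) Metric.ball q (δ⁻¹ · K · r(q)) ⊆ Metric.ball p (3 · K · r(p)); and (iii) r x ≥ r(q) / 2 for every x ∈ Metric.ball q (δ⁻¹ · K · r(q)). -/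
import Mathlib


/-- Point reselection (Section 3.2 of the paper): given a strictly positive function `r`
bounded below on a large ball about `p`, and a point `p'` near `p` where `r` is small,
there is a point `q` where `r` is still small, and which is "almost minimal": `r ≥ r q / 2`
on the ball of radius `δ⁻¹ K r q` about `q`, which moreover stays inside the big ball. -/
theorem point_reselection {X : Type*} [MetricSpace X] (r : X → ℝ)
    (hr : ∀ x : X, 0 < r x) (K δ : ℝ) (hK : 0 < K) (hδ0 : 0 < δ) (hδ1 : δ ≤ 1)
    (p p' : X) (hd : dist p' p ≤ K * r p) (hsmall : r p' < δ * r p)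
    (c : ℝ) (hc : 0 < c) (hlow : ∀ x ∈ Metric.ball p (3 * K * r p), c ≤ r x) :
    ∃ q ∈ Metric.ball p (3 * K * r p),
      r q < δ * r p ∧
      Metric.ball q (δ⁻¹ * K * r q) ⊆ Metric.ball p (3 * K * r p) ∧
      ∀ x ∈ Metric.ball q (δ⁻¹ * K * r q), r q / 2 ≤ r x := by
  have hδinv : 0 < δ⁻¹ := inv_pos.mpr hδ0
  have hδδ : δ⁻¹ * δ = 1 := inv_mul_cancel₀ (ne_of_gt hδ0)
  -- main induction: from any point satisfying the invariant we find a good point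
  have key : ∀ n : ℕ, ∀ q : X,
      dist q p + 2 * (δ⁻¹ * K * r q) < 3 * K * r p → r q < δ * r p → r q ≤ c * 2 ^ n →
      ∃ q', (dist q' p + 2 * (δ⁻¹ * K * r q') < 3 * K * r p) ∧ r q' < δ * r p ∧
        ∀ x ∈ Metric.ball q' (δ⁻¹ * K * r q'), r q' / 2 ≤ r x := by
    intro n
    induction n with
    | zero =>
      intro q hq1 hq2 hq3
      refine ⟨q, hq1, hq2, ?_⟩
      intro x hx
      by_contra h
      push_neg at h
      rw [Metric.mem_ball] at hx
      have hxp : x ∈ Metric.ball p (3 * K * r p) := by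
        rw [Metric.mem_ball]
        have ht : dist x p ≤ dist x q + dist q p := dist_triangle x q p
        nlinarith [hr q, mul_pos (mul_pos hδinv hK) (hr q)]
      have hcx := hlow x hxp
      simp only [pow_zero, mul_one] at hq3
      linarith [hr q]
    | succ n ih =>
      intro q hq1 hq2 hq3
      by_cases hgood : ∀ x ∈ Metric.ball q (δ⁻¹ * K * r q), r q / 2 ≤ r x
      · exact ⟨q, hq1, hq2, hgood⟩
      · push_neg at hgood
        obtain ⟨x, hx, hxlt⟩ := hgood
        rw [Metric.mem_ball] at hx
        have hδK : 0 < δ⁻¹ * K := mul_pos hδinv hK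
        have htri : dist x p ≤ dist x q + dist q p := dist_triangle x q p
        have hinv1 : dist x p + 2 * (δ⁻¹ * K * r x) < 3 * K * r p := by
          nlinarith
        have hinv2 : r x < δ * r p := by nlinarith [hr q]
        have hinv3 : r x ≤ c * 2 ^ n := by
          have : (c : ℝ) * 2 ^ (n + 1) = 2 * (c * 2 ^ n) := by ring
          nlinarith
        exact ih x hinv1 hinv2 hinv3
  -- find n with r p' ≤ c * 2 ^ n
  obtain ⟨n, hn⟩ := pow_unbounded_of_one_lt (r p' / c) (one_lt_two : (1:ℝ) < 2)
  have hn' : r p' ≤ c * 2 ^ n := by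
    rw [div_lt_iff₀ hc] at hn
    nlinarith
  -- base invariant for p'
  have hbase : dist p' p + 2 * (δ⁻¹ * K * r p') < 3 * K * r p := by
    have : δ⁻¹ * r p' < r p := by
      have := mul_lt_mul_of_pos_left hsmall hδinv
      rwa [← mul_assoc, hδδ, one_mul] at this
    nlinarith
  obtain ⟨q, hq1, hq2, hq3⟩ := key n p' hbase hsmall hn'
  have hδK : 0 < δ⁻¹ * K := mul_pos hδinv hK
  refine ⟨q, ?_, hq2, ?_, hq3⟩
  · rw [Metric.mem_ball]
    nlinarith [hr q]
  · intro x hx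
    rw [Metric.mem_ball] at hx ⊢
    have htri : dist x p ≤ dist x q + dist q p := dist_triangle x q p
    nlinarith [hr q]
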